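/- arXiv:1410.5919 — 3 statements merged into one kernel-verified Lean document; each statement's English description precedes it below -/
import Mathlib

section
/- (Differential privacy implies adversarial privacy.) Let ι be a finite type, S ⊆ ι a set of states, ε ≥ 0 a real number, p : ι → ℝ a prior probability vector (p i ≥ 0 for all i, ∑ᵢ p i = 1) whose support is contained in S (p i = 0 for i ∉ S), and q : ι → ℝ a likelihood function with q i > 0 for all i ∈ S. If q i ≤ exp(ε) · q j for all i, j ∈ S (the differential privacy condition on the mechanism's output probabilities), then for every i ∈ ι the Bayesian posterior is bounded by exp(ε) times the prior: p i · q i / (∑ⱼ p j · q j) ≤ exp(ε) · p i. -/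
open Real

/-- Differential privacy implies adversarial privacy: if the likelihoods `q` satisfy the
`ε`-differential-privacy ratio bound on the support set `S` and the prior `p` is supported
on `S`, then the Bayesian posterior is at most `exp ε` times the prior. -/
theorem dp_implies_adversarial_privacy {ι : Type*} [Fintype ι]
    (S : Set ι) (ε : ℝ) (hε : 0 ≤ ε)
    (p : ι → ℝ) (hp_nonneg : ∀ i, 0 ≤ p i) (hp_sum : ∑ i, p i = 1)
    (hp_supp : ∀ i ∉ S, p i = 0)
    (q : ι → ℝ) (hq_pos : ∀ i ∈ S, 0 < q i)
    (hdp : ∀ i ∈ S, ∀ j ∈ S, q i ≤ exp ε * q j) :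
    ∀ i : ι, p i * q i / (∑ j, p j * q j) ≤ exp ε * p i := by
  intro i
  have hterm : ∀ j, 0 ≤ p j * q j := by
    intro j
    by_cases hj : j ∈ S
    · exact mul_nonneg (hp_nonneg j) (hq_pos j hj).le
    · simp [hp_supp j hj]
  by_cases hpi : p i = 0
  · simp [hpi]
  have hiS : i ∈ S := by
    by_contra h
    exact hpi (hp_supp i h)
  have hpi' : 0 < p i := lt_of_le_of_ne (hp_nonneg i) (Ne.symm hpi)
  have hD : 0 < ∑ j, p j * q j := by
    calc 0 < p i * q i := mul_pos hpi' (hq_pos i hiS)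
    _ ≤ ∑ j, p j * q j :=
      Finset.single_le_sum (fun j _ => hterm j) (Finset.mem_univ i)
  have hkey : q i ≤ exp ε * ∑ j, p j * q j := by
    have : q i = ∑ j, p j * q i := by
      rw [← Finset.sum_mul, hp_sum, one_mul]
    rw [this, Finset.mul_sum]
    apply Finset.sum_le_sum
    intro j _
    by_cases hj : j ∈ S
    · have := hdp i hiS j hj
      calc p j * q i ≤ p j * (exp ε * q j) :=
            mul_le_mul_of_nonneg_left this (hp_nonneg j)
        _ = exp ε * (p j * q j) := by ring
    · simp [hp_supp j hj]
  rw [div_le_iff₀ hD]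
  calc p i * q i ≤ p i * (exp ε * ∑ j, p j * q j) :=
        mul_le_mul_of_nonneg_left hkey (hp_nonneg i)
    _ = exp ε * p i * ∑ j, p j * q j := by ring
end

section
/- (Second moment integral of the two-dimensional K-norm mechanism.) Let K ⊆ ℝ² be a compact convex set with 0 in its interior, let ‖·‖_K denote the Minkowski functional (gauge) of K, let ‖·‖₂ denote the Euclidean norm, and let ε > 0. Then ∫_{ℝ²} ‖z‖₂² · exp(−ε ‖z‖_K) dz = (24/ε⁴) · ∫_K ‖x‖₂² dx, where both integrals are with respect to two-dimensional Lebesgue measure. -/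
open Real MeasureTheory

open Set Filter Topology Pointwise
open scoped ENNReal


lemma tendsto_pow_mul_exp_neg_mul (n : ℕ) {c : ℝ} (hc : 0 < c) :
    Tendsto (fun x : ℝ => x ^ n * exp (-(c * x))) atTop (𝓝 0) := by
  have h := (tendsto_pow_mul_exp_neg_atTop_nhds_zero n).comp
    (tendsto_id.const_mul_atTop hc)
  have h2 := h.const_mul ((c ^ n)⁻¹)
  rw [mul_zero] at h2
  refine h2.congr fun x => ?_
  simp only [Function.comp_apply, id_eq, mul_pow]
  field_simp

lemma integrableOn_pow_mul_exp {c : ℝ} (hc : 0 < c) (n : ℕ) :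
    IntegrableOn (fun x : ℝ => x ^ n * exp (-(c * x))) (Ioi 0) := by
  refine integrable_of_isBigO_exp_neg (half_pos hc) (Continuous.continuousOn (by fun_prop)) ?_
  have ht : Tendsto (fun x : ℝ => x ^ n * exp (-(c / 2 * x))) atTop (𝓝 0) :=
    tendsto_pow_mul_exp_neg_mul n (half_pos hc)
  have hb : ∀ᶠ x : ℝ in atTop, |x ^ n * exp (-(c * x))| ≤ 1 * |exp (-(c / 2) * x)| := by
    filter_upwards [ht.eventually (eventually_le_nhds (by norm_num : (0:ℝ) < 1)),
      eventually_ge_atTop (0:ℝ)] with x hx hx0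
    have hxe : exp (-(c * x)) = exp (-(c / 2 * x)) * exp (-(c / 2 * x)) := by
      rw [← exp_add]; ring_nf
    rw [hxe, ← mul_assoc, one_mul]
    rw [abs_of_nonneg (by positivity), abs_of_nonneg (exp_pos _).le]
    have : x ^ n * exp (-(c / 2 * x)) ≤ 1 := hx
    calc x ^ n * exp (-(c / 2 * x)) * exp (-(c / 2 * x))
        ≤ 1 * exp (-(c / 2 * x)) := by
          exact mul_le_mul_of_nonneg_right this (exp_pos _).le
      _ = exp (-(c / 2) * x) := by rw [one_mul]; ring_nf
  exact Asymptotics.IsBigO.of_bound 1 hb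

lemma integral_pow_mul_exp {c : ℝ} (hc : 0 < c) :
    ∫ s in Ioi (0:ℝ), s ^ 4 * exp (-(c * s)) = 24 / c ^ 5 := by
  have h := Real.integral_rpow_mul_exp_neg_mul_Ioi (by norm_num : (0:ℝ) < 5) hc
  have heq : ∫ t in Ioi (0:ℝ), t ^ ((5:ℝ) - 1) * exp (-(c * t))
      = ∫ s in Ioi (0:ℝ), s ^ 4 * exp (-(c * s)) := by
    refine setIntegral_congr_fun measurableSet_Ioi fun t ht => ?_
    rw [show ((5:ℝ) - 1) = ((4:ℕ):ℝ) by norm_num, rpow_natCast]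
  rw [heq] at h
  rw [h, show ((1:ℝ)/c) ^ (5:ℝ) = (1/c) ^ (5:ℕ) by
    rw [show ((5:ℝ)) = ((5:ℕ):ℝ) by norm_num, rpow_natCast]]
  rw [show (5:ℝ) = ((4:ℕ):ℝ) + 1 by norm_num, Real.Gamma_nat_eq_factorial]
  norm_num [Nat.factorial]
  ring

lemma integral_exp_Ioi {c : ℝ} (hc : 0 < c) (t : ℝ) :
    ∫ s in Ioi t, c * exp (-(c * s)) = exp (-(c * t)) := by
  have hderiv : ∀ x ∈ Ici t, HasDerivAt (fun s => -exp (-(c * s))) (c * exp (-(c * x))) x := by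
    intro x _
    have h1 : HasDerivAt (fun s : ℝ => -(c * s)) (-c) x := by
      simpa [Pi.neg_def] using ((hasDerivAt_id x).const_mul c).neg
    have := h1.exp.neg
    simpa [mul_comm, Pi.neg_def] using this
  have hint : IntegrableOn (fun x : ℝ => c * exp (-(c * x))) (Ioi t) := by
    have := (exp_neg_integrableOn_Ioi t hc).const_mul c
    simpa [neg_mul, IntegrableOn] using this
  have htend : Tendsto (fun s : ℝ => -exp (-(c * s))) atTop (𝓝 0) := by
    have h1 : Tendsto (fun s : ℝ => -(c * s)) atTop atBot := by
      simpa [neg_mul] using tendsto_id.const_mul_atTop_of_neg (neg_neg_iff_pos.2 hc)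
    have := (tendsto_exp_atBot.comp h1).neg
    simpa using this
  simpa using integral_Ioi_of_hasDerivAt_of_tendsto' hderiv hint htend

lemma lintegral_exp_indicator {c : ℝ} (hc : 0 < c) {t : ℝ} (ht : 0 ≤ t) :
    ∫⁻ s in Ioi (0:ℝ), (Ici t).indicator (fun s => ENNReal.ofReal (c * exp (-(c * s)))) s
      = ENNReal.ofReal (exp (-(c * t))) := by
  rw [lintegral_indicator measurableSet_Ici, Measure.restrict_restrict measurableSet_Ici]
  have hset : (Ici t ∩ Ioi 0 : Set ℝ) =ᵐ[volume] Ioi t := by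
    rw [MeasureTheory.ae_eq_set]
    constructor
    · refine measure_mono_null (fun x hx => ?_) (measure_singleton t)
      rcases hx with ⟨⟨h1, _⟩, h2⟩
      simp only [mem_Ioi, not_lt] at h2
      exact mem_singleton_iff.2 (le_antisymm h2 h1)
    · refine measure_mono_null (fun x hx => ?_) (measure_empty (μ := volume))
      rcases hx with ⟨h1, h2⟩
      exact absurd ⟨mem_Ici.2 (le_of_lt h1), mem_Ioi.2 (lt_of_le_of_lt ht h1)⟩ h2
  rw [Measure.restrict_congr_set hset]
  rw [← ofReal_integral_eq_lintegral_ofReal]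
  · rw [integral_exp_Ioi hc]
  · have := (exp_neg_integrableOn_Ioi t hc).const_mul c
    simpa [neg_mul] using this
  · exact Eventually.of_forall fun x => by positivity


/-- Second moment integral of the two-dimensional K-norm mechanism:
`∫ ‖z‖₂² exp (-ε ‖z‖_K) dz = (24/ε⁴) ∫_K ‖x‖₂² dx`. -/
theorem knorm_mechanism_second_moment (K : Set (EuclideanSpace ℝ (Fin 2)))
    (hKcomp : IsCompact K) (hKconv : Convex ℝ K) (h0 : (0 : EuclideanSpace ℝ (Fin 2)) ∈ interior K)
    (ε : ℝ) (hε : 0 < ε) :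
    (∫ z : EuclideanSpace ℝ (Fin 2), ‖z‖ ^ 2 * exp (-ε * gauge K z)) =
      24 / ε ^ 4 * ∫ x in K, ‖x‖ ^ 2 := by
  have hK0 : K ∈ 𝓝 (0 : EuclideanSpace ℝ (Fin 2)) := mem_interior_iff_mem_nhds.1 h0
  have hgcont : Continuous (gauge K) := continuous_gauge hKconv hK0
  have hgnn : ∀ z : EuclideanSpace ℝ (Fin 2), 0 ≤ gauge K z := fun z => gauge_nonneg z
  have hlev : ∀ s : ℝ, 0 < s → {z : EuclideanSpace ℝ (Fin 2) | gauge K z ≤ s} = s • K := by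
    intro s hs
    ext z
    simp only [mem_setOf_eq]
    rw [mem_smul_set_iff_inv_smul_mem₀ hs.ne']
    have h1 : (s⁻¹ • z ∈ K) ↔ gauge K (s⁻¹ • z) ≤ 1 := by
      rw [gauge_le_one_iff_mem_closure hKconv hK0, hKcomp.isClosed.closure_eq]
    rw [h1, gauge_smul_of_nonneg (inv_nonneg.2 hs.le), smul_eq_mul,
      inv_mul_le_iff₀ hs, mul_one]
  set C : ℝ := ∫ x in K, ‖x‖ ^ 2 with hCdef
  have hCnn : 0 ≤ C := setIntegral_nonneg hKcomp.isClosed.measurableSet fun x _ => by positivity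
  have hscale : ∀ s : ℝ, 0 < s → ∫ z in s • K, ‖z‖ ^ 2 = s ^ 4 * C := by
    intro s hs
    have h2 : Module.finrank ℝ (EuclideanSpace ℝ (Fin 2)) = 2 := finrank_euclideanSpace_fin
    have h := Measure.setIntegral_comp_smul_of_pos volume
      (fun z : EuclideanSpace ℝ (Fin 2) => ‖z‖ ^ 2) K hs
    rw [h2] at h
    have hl : (∫ x in K, ‖s • x‖ ^ 2) = s ^ 2 * C := by
      rw [← integral_const_mul]
      refine setIntegral_congr_fun hKcomp.isClosed.measurableSet fun x _ => ?_
      rw [norm_smul, mul_pow]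
      simp [abs_of_pos hs, sq_abs]
    rw [hl, smul_eq_mul] at h
    have hs2 : (s:ℝ) ^ 2 ≠ 0 := by positivity
    field_simp at h
    nlinarith [h]
  have hsmulK : ∀ s : ℝ, IsCompact (s • K) := by
    intro s
    rw [← Set.image_smul]
    exact hKcomp.image (continuous_const_smul s)
  -- the product function
  set Φ : EuclideanSpace ℝ (Fin 2) × ℝ → ℝ≥0∞ := fun p =>
    {q : EuclideanSpace ℝ (Fin 2) × ℝ | gauge K q.1 ≤ q.2}.indicator
      (fun q => ENNReal.ofReal (‖q.1‖ ^ 2 * (ε * exp (-(ε * q.2))))) p with hΦdef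
  have hΦmeas : Measurable Φ := by
    refine Measurable.indicator ?_ ?_
    · exact Measurable.ennreal_ofReal (by fun_prop)
    · exact (isClosed_le (hgcont.comp continuous_fst) continuous_snd).measurableSet
  have step1 : ∀ z : EuclideanSpace ℝ (Fin 2),
      ∫⁻ s in Ioi (0:ℝ), Φ (z, s) = ENNReal.ofReal (‖z‖ ^ 2 * exp (-ε * gauge K z)) := by
    intro z
    have hz : ∀ s : ℝ, Φ (z, s) = ENNReal.ofReal (‖z‖ ^ 2) *
        (Ici (gauge K z)).indicator (fun s => ENNReal.ofReal (ε * exp (-(ε * s)))) s := by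
      intro s
      by_cases h : gauge K z ≤ s
      · rw [hΦdef]
        simp only [Set.indicator_of_mem (show (z,s) ∈ {q : EuclideanSpace ℝ (Fin 2) × ℝ | gauge K q.1 ≤ q.2} from h),
          Set.indicator_of_mem (show s ∈ Ici (gauge K z) from h)]
        rw [ENNReal.ofReal_mul (by positivity)]
      · rw [hΦdef]
        simp only [Set.indicator_of_notMem (show (z,s) ∉ {q : EuclideanSpace ℝ (Fin 2) × ℝ | gauge K q.1 ≤ q.2} from h),
          Set.indicator_of_notMem (show s ∉ Ici (gauge K z) from h), mul_zero]
    simp_rw [hz]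
    rw [lintegral_const_mul' _ _ ENNReal.ofReal_ne_top,
      lintegral_exp_indicator hε (hgnn z),
      ← ENNReal.ofReal_mul (by positivity)]
    congr 2
    ring_nf
  have step2 : ∀ s ∈ Ioi (0:ℝ), ∫⁻ z : EuclideanSpace ℝ (Fin 2), Φ (z, s)
      = ENNReal.ofReal ((ε * C) * (s ^ 4 * exp (-(ε * s)))) := by
    intro s hs
    rw [mem_Ioi] at hs
    have hz : ∀ z : EuclideanSpace ℝ (Fin 2), Φ (z, s) = ({z : EuclideanSpace ℝ (Fin 2) | gauge K z ≤ s}).indicator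
        (fun z => ENNReal.ofReal (‖z‖ ^ 2 * (ε * exp (-(ε * s))))) z := by
      intro z
      simp [hΦdef, Set.indicator_apply]
    simp_rw [hz, hlev s hs]
    rw [lintegral_indicator (hsmulK s).isClosed.measurableSet]
    have hint : IntegrableOn (fun z : EuclideanSpace ℝ (Fin 2) => ‖z‖ ^ 2 * (ε * exp (-(ε * s))))
        (s • K) := by
      exact (Continuous.continuousOn (by fun_prop)).integrableOn_compact (hsmulK s)
    rw [← ofReal_integral_eq_lintegral_ofReal hint
      (Eventually.of_forall fun z => by positivity)]
    rw [integral_mul_const, hscale s hs]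
    congr 1
    ring
  have hswap : ∫⁻ z : EuclideanSpace ℝ (Fin 2), ∫⁻ s in Ioi (0:ℝ), Φ (z, s)
      = ∫⁻ s in Ioi (0:ℝ), ∫⁻ z : EuclideanSpace ℝ (Fin 2), Φ (z, s) := by
    exact lintegral_lintegral_swap hΦmeas.aemeasurable
  have hT : ∫⁻ z : EuclideanSpace ℝ (Fin 2), ENNReal.ofReal (‖z‖ ^ 2 * exp (-ε * gauge K z))
      = ENNReal.ofReal (24 / ε ^ 4 * C) := by
    rw [← lintegral_congr step1, hswap,
      setLIntegral_congr_fun measurableSet_Ioi step2]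
    have hint2 : IntegrableOn (fun s : ℝ => (ε * C) * (s ^ 4 * exp (-(ε * s)))) (Ioi 0) :=
      (integrableOn_pow_mul_exp hε 4).const_mul _
    rw [← ofReal_integral_eq_lintegral_ofReal hint2 (ae_restrict_of_forall_mem measurableSet_Ioi
      (fun s hs => by have : (0:ℝ) < s := hs; positivity))]
    rw [integral_const_mul, integral_pow_mul_exp hε]
    congr 1
    field_simp
  have hmeas : AEStronglyMeasurable
      (fun z : EuclideanSpace ℝ (Fin 2) => ‖z‖ ^ 2 * exp (-ε * gauge K z)) volume :=
    (Continuous.mul (by fun_prop) (continuous_exp.comp (by fun_prop))).aestronglyMeasurable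
  rw [integral_eq_lintegral_of_nonneg_ae (Eventually.of_forall fun z => by positivity) hmeas,
    hT, ENNReal.toReal_ofReal (by positivity)]
end

section
/- (Expected squared error of the two-dimensional K-norm mechanism.) Let K ⊆ ℝ² be a compact convex set with 0 in its interior and positive Lebesgue measure, let ‖·‖_K denote the Minkowski functional (gauge) of K, and let ε > 0. For the probability density p(z) = (ε²/(2 · vol(K))) · exp(−ε ‖z‖_K) on ℝ², the expected squared Euclidean norm satisfies ∫_{ℝ²} ‖z‖₂² · p(z) dz = (12/(ε² · vol(K))) · ∫_K ‖x‖₂² dx, i.e. 12/ε² times the mean squared Euclidean norm of a uniform point in K. -/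
open Real MeasureTheory
open Set Pointwise


lemma exp_tail (ε s : ℝ) (hε : 0 < ε) : ∫ t in Ioi s, ε * exp (-ε * t) = exp (-ε * s) := by
  have h := integral_Ioi_of_hasDerivAt_of_tendsto
    (f := fun t => -exp (-ε * t)) (f' := fun t => ε * exp (-ε * t)) (a := s) (m := 0)
    (Continuous.continuousWithinAt (by continuity))
    (fun x _ => by
      have : HasDerivAt (fun t : ℝ => -ε * t) (-ε) x := by
        simpa using (hasDerivAt_id x).const_mul (-ε)
      have := (this.exp).neg
      convert this using 1
      · funext t; simp
      · ring)
    ((exp_neg_integrableOn_Ioi s hε).const_mul ε)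
    ?_
  · simpa using h
  · have h1 : Filter.Tendsto (fun t : ℝ => ε * t) Filter.atTop Filter.atTop :=
      Filter.Tendsto.const_mul_atTop hε Filter.tendsto_id
    have : Filter.Tendsto (fun t : ℝ => exp (-(ε * t))) Filter.atTop (nhds 0) :=
      Real.tendsto_exp_neg_atTop_nhds_zero.comp h1
    simp only [neg_mul]
    simpa using this.neg

lemma exp_tail_lintegral (ε s : ℝ) (hε : 0 < ε) :
    ∫⁻ t in Ioi s, ENNReal.ofReal (ε * exp (-ε * t)) = ENNReal.ofReal (exp (-ε * s)) := by
  rw [← exp_tail ε s hε]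
  rw [ofReal_integral_eq_lintegral_ofReal ((exp_neg_integrableOn_Ioi s hε).const_mul ε)
    (Filter.Eventually.of_forall fun t => by positivity)]

variable {K : Set (EuclideanSpace ℝ (Fin 2))}

lemma sublevel_eq (hKcomp : IsCompact K) (hKconv : Convex ℝ K)
    (h0 : (0 : EuclideanSpace ℝ (Fin 2)) ∈ interior K) {t : ℝ} (ht : 0 < t) :
    {z : EuclideanSpace ℝ (Fin 2) | gauge K z ≤ t} = t • K := by
  have hK0 : K ∈ nhds 0 := mem_interior_iff_mem_nhds.1 h0
  ext z
  rw [mem_smul_set_iff_inv_smul_mem₀ ht.ne']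
  have hg : gauge K (t⁻¹ • z) = t⁻¹ * gauge K z := by
    rw [gauge_smul_of_nonneg (by positivity : (0:ℝ) ≤ t⁻¹)]; rfl
  have hmem : t⁻¹ • z ∈ K ↔ gauge K (t⁻¹ • z) ≤ 1 := by
    rw [gauge_le_one_iff_mem_closure hKconv hK0, hKcomp.isClosed.closure_eq]
  rw [mem_setOf_eq, hmem, hg, inv_mul_le_iff₀ ht, mul_one]

lemma strict_sublevel_ae (hKcomp : IsCompact K) (hKconv : Convex ℝ K)
    (h0 : (0 : EuclideanSpace ℝ (Fin 2)) ∈ interior K) {t : ℝ} (ht : 0 < t) :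
    {z : EuclideanSpace ℝ (Fin 2) | gauge K z < t} =ᵐ[volume] (t • K) := by
  have hK0 : K ∈ nhds 0 := mem_interior_iff_mem_nhds.1 h0
  have hfr : {z : EuclideanSpace ℝ (Fin 2) | gauge K z = t} ⊆ t • frontier K := by
    intro z hz
    rw [mem_smul_set_iff_inv_smul_mem₀ ht.ne',
      ← gauge_eq_one_iff_mem_frontier hKconv hK0,
      gauge_smul_of_nonneg (by positivity : (0:ℝ) ≤ t⁻¹), smul_eq_mul,
      mem_setOf_eq.mp hz, inv_mul_cancel₀ ht.ne']
  have hnull : volume {z : EuclideanSpace ℝ (Fin 2) | gauge K z = t} = 0 := by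
    refine measure_mono_null hfr ?_
    rw [Measure.addHaar_smul volume, hKconv.addHaar_frontier volume, mul_zero]
  rw [← sublevel_eq hKcomp hKconv h0 ht]
  refine MeasureTheory.ae_eq_set.2 ⟨?_, ?_⟩
  · have h : {z : EuclideanSpace ℝ (Fin 2) | gauge K z < t} \ {z | gauge K z ≤ t} = ∅ :=
      eq_empty_of_forall_notMem fun z hz => hz.2 (le_of_lt hz.1 : gauge K z ≤ t)
    simp [h]
  · refine measure_mono_null (fun z hz => ?_) hnull
    exact le_antisymm hz.1 (not_lt.1 hz.2)

lemma scaling_lintegral (hKcomp : IsCompact K) {t : ℝ} (ht : 0 < t) :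
    ∫⁻ z in t • K, ENNReal.ofReal (‖z‖ ^ 2)
      = ENNReal.ofReal (t ^ 4) * ∫⁻ x in K, ENNReal.ofReal (‖x‖ ^ 2) := by
  have hKm : MeasurableSet K := hKcomp.isClosed.measurableSet
  have htKm : MeasurableSet (t • K) := by
    have : IsCompact (t • K) := hKcomp.smul t
    exact this.isClosed.measurableSet
  set F : EuclideanSpace ℝ (Fin 2) → ENNReal :=
    (t • K).indicator (fun z => ENNReal.ofReal (‖z‖ ^ 2)) with hF
  have hFm : Measurable F := by
    exact (Measurable.indicator (by fun_prop) htKm)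
  have hmap := Measure.map_addHaar_smul (volume (α := EuclideanSpace ℝ (Fin 2))) ht.ne'
  have hrank : Module.finrank ℝ (EuclideanSpace ℝ (Fin 2)) = 2 := finrank_euclideanSpace_fin
  rw [hrank] at hmap
  have h1 : ∫⁻ x, F (t • x) = ENNReal.ofReal ((t ^ 2)⁻¹) * ∫⁻ z, F z := by
    rw [← lintegral_map hFm (measurable_const_smul t), hmap, lintegral_smul_measure,
      abs_of_pos (by positivity), smul_eq_mul]
  have h2 : ∫⁻ x, F (t • x) = ENNReal.ofReal (t ^ 2) * ∫⁻ x in K, ENNReal.ofReal (‖x‖ ^ 2) := by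
    have : ∀ x, F (t • x) = K.indicator (fun x => ENNReal.ofReal (t ^ 2) * ENNReal.ofReal (‖x‖ ^ 2)) x := by
      intro x
      by_cases hx : x ∈ K
      · rw [hF, indicator_of_mem (smul_mem_smul_set hx), indicator_of_mem hx,
          ← ENNReal.ofReal_mul (by positivity)]
        congr 1
        rw [norm_smul]
        simp [abs_of_pos ht]
        ring
      · rw [hF, indicator_of_notMem (fun h => hx ((smul_mem_smul_set_iff₀ ht.ne' K x).1 h)),
          indicator_of_notMem hx]
    simp_rw [this]
    rw [lintegral_indicator hKm, lintegral_const_mul _ (by fun_prop)]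
  have key : ENNReal.ofReal (t ^ 2) * ENNReal.ofReal ((t ^ 2)⁻¹) = 1 := by
    rw [← ENNReal.ofReal_mul (by positivity), mul_inv_cancel₀ (by positivity)]
    exact ENNReal.ofReal_one
  have hL : ∫⁻ z in t • K, ENNReal.ofReal (‖z‖ ^ 2) = ∫⁻ z, F z :=
    (lintegral_indicator htKm _).symm
  rw [hL]
  calc ∫⁻ z, F z = 1 * ∫⁻ z, F z := (one_mul _).symm
    _ = ENNReal.ofReal (t ^ 2) * (ENNReal.ofReal ((t ^ 2)⁻¹) * ∫⁻ z, F z) := by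
        rw [← mul_assoc, key]
    _ = ENNReal.ofReal (t ^ 2) * (ENNReal.ofReal (t ^ 2) * ∫⁻ x in K, ENNReal.ofReal (‖x‖ ^ 2)) := by
        rw [← h1, h2]
    _ = ENNReal.ofReal (t ^ 4) * ∫⁻ x in K, ENNReal.ofReal (‖x‖ ^ 2) := by
        rw [← mul_assoc, ← ENNReal.ofReal_mul (by positivity)]
        norm_num
        ring_nf

lemma t4_integrable {ε : ℝ} (hε : 0 < ε) :
    IntegrableOn (fun t : ℝ => ε * exp (-ε * t) * t ^ 4) (Ioi 0) := by
  have h : IntegrableOn (fun t : ℝ => ε * (t ^ (4:ℝ) * exp (-ε * t ^ (1:ℝ)))) (Ioi 0) :=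
    (integrableOn_rpow_mul_exp_neg_mul_rpow (p := 1) (s := 4) (b := ε)
      (by norm_num) (by norm_num) hε).const_mul ε
  refine h.congr_fun (fun t ht => ?_) measurableSet_Ioi
  have ht' : (0:ℝ) < t := ht
  dsimp only
  rw [Real.rpow_one, show ((4:ℝ)) = ((4:ℕ):ℝ) by norm_num, Real.rpow_natCast]
  ring

lemma t4_integral {ε : ℝ} (hε : 0 < ε) :
    ∫ t in Ioi (0:ℝ), ε * exp (-ε * t) * t ^ 4 = 24 / ε ^ 4 := by
  have h := integral_rpow_mul_exp_neg_mul_Ioi (a := 5) (r := ε) (by norm_num) hε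
  have hΓ : Real.Gamma 5 = 24 := by
    rw [show (5:ℝ) = (4:ℕ) + 1 by norm_num, Real.Gamma_nat_eq_factorial]
    norm_num [Nat.factorial]
  have hcongr : ∫ t in Ioi (0:ℝ), ε * exp (-ε * t) * t ^ 4
      = ε * ∫ t in Ioi (0:ℝ), t ^ ((5:ℝ) - 1) * exp (-(ε * t)) := by
    rw [← integral_const_mul]
    refine setIntegral_congr_fun measurableSet_Ioi (fun t ht => ?_)
    have ht' : (0:ℝ) < t := ht
    rw [show (5:ℝ) - 1 = (4:ℕ) by norm_num, Real.rpow_natCast]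
    rw [neg_mul]
    ring
  rw [hcongr, h, hΓ]
  rw [show (5:ℝ) = ((5:ℕ):ℝ) by norm_num, Real.rpow_natCast]
  rw [div_pow, one_pow, div_mul_eq_mul_div, one_mul, mul_div_assoc',
    show ε ^ 5 = ε * ε ^ 4 by ring, mul_div_mul_left _ _ hε.ne']

lemma t4_lintegral {ε : ℝ} (hε : 0 < ε) :
    ∫⁻ t in Ioi (0:ℝ), ENNReal.ofReal (ε * exp (-ε * t)) * ENNReal.ofReal (t ^ 4)
      = ENNReal.ofReal (24 / ε ^ 4) := by
  have heq : ∀ᵐ t ∂(volume.restrict (Ioi (0:ℝ))),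
      ENNReal.ofReal (ε * exp (-ε * t)) * ENNReal.ofReal (t ^ 4)
        = ENNReal.ofReal (ε * exp (-ε * t) * t ^ 4) := by
    refine Filter.Eventually.of_forall (fun t => ?_)
    rw [← ENNReal.ofReal_mul (by positivity)]
  rw [lintegral_congr_ae heq, ← ofReal_integral_eq_lintegral_ofReal (t4_integrable hε)
    (Filter.Eventually.of_forall (fun t => by positivity)), t4_integral hε]

/-- Expected squared error of the two-dimensional K-norm mechanism: for the density
`p(z) = (ε²/(2 vol K)) exp (-ε ‖z‖_K)`, the expected squared Euclidean norm equals
`12/ε²` times the mean squared Euclidean norm of a uniform point in `K`. -/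
theorem knorm_mechanism_expected_squared_error (K : Set (EuclideanSpace ℝ (Fin 2)))
    (hKcomp : IsCompact K) (hKconv : Convex ℝ K) (h0 : (0 : EuclideanSpace ℝ (Fin 2)) ∈ interior K)
    (hKpos : 0 < (volume K).toReal) (ε : ℝ) (hε : 0 < ε) :
    (∫ z : EuclideanSpace ℝ (Fin 2),
        ‖z‖ ^ 2 * (ε ^ 2 / (2 * (volume K).toReal) * exp (-ε * gauge K z))) =
      12 / (ε ^ 2 * (volume K).toReal) * ∫ x in K, ‖x‖ ^ 2 := by
  classical
  have hK0 : K ∈ nhds 0 := mem_interior_iff_mem_nhds.1 h0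
  have hgc : Continuous (gauge K) := continuous_gauge hKconv hK0
  have hgm : Measurable (gauge K) := hgc.measurable
  set V := (volume K).toReal with hV
  have hVpos : 0 < V := hKpos
  set c := ε ^ 2 / (2 * V) with hc
  have hcpos : 0 < c := div_pos (by positivity) (by linarith)
  set IK := ∫⁻ x in K, ENNReal.ofReal (‖x‖ ^ 2) with hIK
  -- RHS
  have hRHS : ∫ x in K, ‖x‖ ^ 2 = IK.toReal := by
    rw [integral_eq_lintegral_of_nonneg_ae (f := fun x => ‖x‖ ^ 2) (Filter.Eventually.of_forall fun x => by positivity)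
      ((continuous_norm.pow 2).aestronglyMeasurable)]
  -- joint function
  set S : Set (EuclideanSpace ℝ (Fin 2) × ℝ) := {p | gauge K p.1 < p.2} with hS
  have hSm : MeasurableSet S := measurableSet_lt (hgm.comp measurable_fst) measurable_snd
  set F : EuclideanSpace ℝ (Fin 2) × ℝ → ENNReal := fun p =>
    ENNReal.ofReal (‖p.1‖ ^ 2) * S.indicator (fun q => ENNReal.ofReal (ε * exp (-ε * q.2))) p
    with hFdef
  have hFm : Measurable F := by
    apply Measurable.mul
    · fun_prop
    · exact Measurable.indicator (by fun_prop) hSm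
  -- pointwise: F (z,t) with t-integral recovers exp
  have hFz : ∀ z : EuclideanSpace ℝ (Fin 2),
      ∫⁻ t in Ioi (0:ℝ), F (z, t) = ENNReal.ofReal (‖z‖ ^ 2) * ENNReal.ofReal (exp (-ε * gauge K z)) := by
    intro z
    have h1 : ∀ t : ℝ, F (z, t)
        = ENNReal.ofReal (‖z‖ ^ 2) * (Ioi (gauge K z)).indicator
            (fun t => ENNReal.ofReal (ε * exp (-ε * t))) t := by
      intro t
      simp only [hFdef, hS, Set.indicator_apply, Set.mem_setOf_eq, Set.mem_Ioi]
    simp_rw [h1]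
    rw [lintegral_const_mul _ ((Measurable.indicator (by fun_prop) measurableSet_Ioi))]
    congr 1
    rw [lintegral_indicator measurableSet_Ioi, Measure.restrict_restrict measurableSet_Ioi,
      Ioi_inter_Ioi, sup_eq_left.2 (gauge_nonneg z)]
    exact exp_tail_lintegral ε (gauge K z) hε
  -- inner z-integral at fixed positive t
  have hinner : ∀ t : ℝ, 0 < t →
      ∫⁻ z, F (z, t) = ENNReal.ofReal (ε * exp (-ε * t)) * (ENNReal.ofReal (t ^ 4) * IK) := by
    intro t ht
    have h1 : ∀ z : EuclideanSpace ℝ (Fin 2), F (z, t)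
        = ({z : EuclideanSpace ℝ (Fin 2) | gauge K z < t}).indicator
            (fun z => ENNReal.ofReal (‖z‖ ^ 2)) z * ENNReal.ofReal (ε * exp (-ε * t)) := by
      intro z
      simp only [hFdef, hS, Set.indicator_apply, Set.mem_setOf_eq]
      by_cases hz : gauge K z < t <;> simp [hz, mul_comm]
    have hsetm : MeasurableSet {z : EuclideanSpace ℝ (Fin 2) | gauge K z < t} :=
      measurableSet_lt hgm measurable_const
    simp_rw [h1]
    rw [lintegral_mul_const _ ((Measurable.indicator (by fun_prop) hsetm)),
      lintegral_indicator hsetm,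
      setLIntegral_congr (strict_sublevel_ae hKcomp hKconv h0 ht),
      scaling_lintegral hKcomp ht]
    ring
  -- the main lintegral
  have hL : (∫⁻ z, ENNReal.ofReal (‖z‖ ^ 2) * ENNReal.ofReal (exp (-ε * gauge K z)))
      = ENNReal.ofReal (24 / ε ^ 4) * IK := by
    have hswap : ∫⁻ z, ∫⁻ t in Ioi (0:ℝ), F (z, t)
        = ∫⁻ t in Ioi (0:ℝ), ∫⁻ z, F (z, t) :=
      lintegral_lintegral_swap hFm.aemeasurable
    calc ∫⁻ z, ENNReal.ofReal (‖z‖ ^ 2) * ENNReal.ofReal (exp (-ε * gauge K z))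
        = ∫⁻ z, ∫⁻ t in Ioi (0:ℝ), F (z, t) := by simp_rw [hFz]
      _ = ∫⁻ t in Ioi (0:ℝ), ∫⁻ z, F (z, t) := hswap
      _ = ∫⁻ t in Ioi (0:ℝ),
            (ENNReal.ofReal (ε * exp (-ε * t)) * ENNReal.ofReal (t ^ 4)) * IK := by
          refine setLIntegral_congr_fun measurableSet_Ioi
            (fun t ht => ?_)
          rw [hinner t ht, mul_assoc]
      _ = (∫⁻ t in Ioi (0:ℝ), ENNReal.ofReal (ε * exp (-ε * t)) * ENNReal.ofReal (t ^ 4)) * IK := by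
          rw [lintegral_mul_const _ (by fun_prop)]
      _ = ENNReal.ofReal (24 / ε ^ 4) * IK := by rw [t4_lintegral hε]
  -- convert the Bochner integral
  have hcont : Continuous fun z : EuclideanSpace ℝ (Fin 2) =>
      ‖z‖ ^ 2 * (c * exp (-ε * gauge K z)) := by
    exact (continuous_norm.pow 2).mul
      (continuous_const.mul (Real.continuous_exp.comp (continuous_const.mul hgc)))
  rw [integral_eq_lintegral_of_nonneg_ae
    (Filter.Eventually.of_forall fun z => by positivity) hcont.aestronglyMeasurable]
  have hsplit : ∀ z : EuclideanSpace ℝ (Fin 2),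
      ENNReal.ofReal (‖z‖ ^ 2 * (c * exp (-ε * gauge K z)))
        = ENNReal.ofReal c * (ENNReal.ofReal (‖z‖ ^ 2) * ENNReal.ofReal (exp (-ε * gauge K z))) := by
    intro z
    rw [← ENNReal.ofReal_mul (by positivity), ← ENNReal.ofReal_mul hcpos.le]
    ring_nf
  simp_rw [hsplit]
  rw [lintegral_const_mul _
    (f := fun z => ENNReal.ofReal (‖z‖ ^ 2) * ENNReal.ofReal (exp (-ε * gauge K z))) (((measurable_norm.pow_const 2).ennreal_ofReal).mul
      (((hgm.const_mul (-ε)).exp).ennreal_ofReal)), hL, hRHS, ← mul_assoc,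
    ← ENNReal.ofReal_mul hcpos.le, ENNReal.toReal_mul, ENNReal.toReal_ofReal (by positivity)]
  congr 1
  rw [hc]
  rw [div_mul_div_comm]
  rw [div_eq_div_iff (by positivity) (by positivity)]
  ring
end
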